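/- Assume 1 < α_min < 2, 2 − α_min − α_sess = −1, and that c = ∫₀^∞ r(x) H̄_I(x) dx < ∞. Then for every t > 0, V(Tt)/(T L_V(T) L_r(T)) → ∞ as T → ∞, and V(t) ~ 2ct as t → ∞. -/

import Mathlib

open MeasureTheory Filter Set

/-- A measurable, positive function `L` on `(0,∞)` is slowly varying at infinity if for
every `c > 0`, `L(cx)/L(x) → 1` as `x → ∞`. -/
def SlowlyVarying (L : ℝ → ℝ) : Prop :=
  Measurable L ∧ (∀ x > 0, 0 < L x) ∧
    ∀ c > 0, Tendsto (fun x => L (c * x) / L x) atTop (nhds 1)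

lemma slowvary_fatou {L : ℝ → ℝ} (hL : SlowlyVarying L) (p : ℝ)
    (hint : ∀ x : ℝ, 1 ≤ x → IntegrableOn (fun u => u ^ p * L u) (Ioc x (2*x)))
    {c : ℝ} (hc : c < ∫ t in Ioc (1:ℝ) 2, t ^ p) :
    ∀ᶠ x in atTop, c * (x ^ (p+1) * L x) ≤ ∫ u in Ioc x (2*x), u ^ p * L u := by
  set κ := ∫ t in Ioc (1:ℝ) 2, t ^ p with hκ
  have hpow_int : IntegrableOn (fun t : ℝ => t ^ p) (Ioc (1:ℝ) 2) := by
    apply (ContinuousOn.integrableOn_Icc ?_).mono_set Ioc_subset_Icc_self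
    intro t ht
    exact (Real.continuousAt_rpow_const t p (Or.inl (by linarith [ht.1] : t ≠ 0))).continuousWithinAt
  have hpow_nn : 0 ≤ᶠ[ae (volume.restrict (Ioc (1:ℝ) 2))] fun t : ℝ => t ^ p := by
    filter_upwards [ae_restrict_mem measurableSet_Ioc] with t ht
    exact (Real.rpow_pos_of_pos (by linarith [ht.1]) p).le
  have hκpos : 0 < κ := by
    rw [hκ, setIntegral_pos_iff_support_of_nonneg_ae hpow_nn hpow_int]
    have hsub : Ioc (1:ℝ) 2 ⊆ Function.support (fun t : ℝ => t ^ p) ∩ Ioc 1 2 := by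
      intro t ht
      exact ⟨ne_of_gt (Real.rpow_pos_of_pos (by linarith [ht.1]) p), ht⟩
    have h1 : (0:ENNReal) < volume (Ioc (1:ℝ) 2) := by simp
    exact lt_of_lt_of_le h1 (measure_mono hsub)
  by_contra hcon
  rw [Filter.not_eventually] at hcon
  have h' := Filter.frequently_atTop.mp hcon
  choose X hX1 hX2 using h'
  set x : ℕ → ℝ := fun n => X (max 1 (n : ℝ)) with hxdef
  have hx1 : ∀ n, (1:ℝ) ≤ x n := fun n => le_trans (le_max_left _ _) (hX1 _)
  have hx0 : ∀ n, (0:ℝ) < x n := fun n => lt_of_lt_of_le one_pos (hx1 n)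
  have hxtop : Tendsto x atTop atTop :=
    tendsto_atTop_mono (fun n => le_trans (le_max_right _ _) (hX1 _)) tendsto_natCast_atTop_atTop
  have hlt : ∀ n, (∫ u in Ioc (x n) (2 * x n), u ^ p * L u) < c * ((x n) ^ (p+1) * L (x n)) :=
    fun n => not_le.mp (hX2 _)
  -- change of variables
  have h2x : ∀ n, x n ≤ 2 * x n := fun n => by linarith [hx0 n]
  have hJint : ∀ n, IntegrableOn (fun t => t ^ p * L (x n * t)) (Ioc (1:ℝ) 2) := by
    intro n
    have i1 : IntervalIntegrable (fun u => u ^ p * L u) volume (x n) (2 * x n) :=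
      (intervalIntegrable_iff_integrableOn_Ioc_of_le (h2x n)).mpr (hint (x n) (hx1 n))
    have i2 := i1.comp_mul_left (c := x n)
    have e1 : x n / x n = 1 := div_self (hx0 n).ne'
    have e2 : 2 * x n / x n = 2 := by rw [mul_div_assoc, div_self (hx0 n).ne', mul_one]
    rw [e1, e2] at i2
    have i3 : IntegrableOn (fun t => (x n * t) ^ p * L (x n * t)) (Ioc (1:ℝ) 2) :=
      (intervalIntegrable_iff_integrableOn_Ioc_of_le one_le_two).mp i2
    have i4 := i3.const_mul ((x n) ^ (-p))
    refine IntegrableOn.congr_fun i4 ?_ measurableSet_Ioc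
    intro t ht
    have ht0 : (0:ℝ) < t := by linarith [ht.1]
    have hxp : (0:ℝ) < (x n) ^ p := Real.rpow_pos_of_pos (hx0 n) p
    have hne : ((x n):ℝ) ^ p ≠ 0 := hxp.ne'
    show (x n) ^ (-p) * ((x n * t) ^ p * L (x n * t)) = t ^ p * L (x n * t)
    rw [Real.mul_rpow (hx0 n).le ht0.le, Real.rpow_neg (hx0 n).le]
    field_simp
  have key : ∀ n, (∫ u in Ioc (x n) (2 * x n), u ^ p * L u)
      = (x n) ^ (p+1) * ∫ t in Ioc (1:ℝ) 2, t ^ p * L (x n * t) := by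
    intro n
    have hxp : (0:ℝ) < (x n) ^ p := Real.rpow_pos_of_pos (hx0 n) p
    have e2 : ∫ t in Ioc (1:ℝ) 2, t ^ p * L (x n * t)
        = ∫ t in Ioc (1:ℝ) 2, (x n) ^ (-p) * ((x n * t) ^ p * L (x n * t)) := by
      refine setIntegral_congr_fun measurableSet_Ioc ?_
      intro t ht
      have ht0 : (0:ℝ) < t := by linarith [ht.1]
      have hne : ((x n):ℝ) ^ p ≠ 0 := hxp.ne'
      show t ^ p * L (x n * t) = (x n) ^ (-p) * ((x n * t) ^ p * L (x n * t))
      rw [Real.mul_rpow (hx0 n).le ht0.le, Real.rpow_neg (hx0 n).le]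
      field_simp
    have e3 : ∫ t in Ioc (1:ℝ) 2, (x n) ^ (-p) * ((x n * t) ^ p * L (x n * t))
        = (x n) ^ (-p) * ∫ t in Ioc (1:ℝ) 2, ((x n * t) ^ p * L (x n * t)) :=
      integral_const_mul _ _
    have e4 : ∫ t in Ioc (1:ℝ) 2, ((x n * t) ^ p * L (x n * t))
        = ∫ t in (1:ℝ)..2, (fun u => u ^ p * L u) (x n * t) :=
      (intervalIntegral.integral_of_le one_le_two).symm
    have e5 : (∫ t in (1:ℝ)..2, (fun u => u ^ p * L u) (x n * t))
        = (x n)⁻¹ • ∫ u in (x n * 1)..(x n * 2), u ^ p * L u :=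
      intervalIntegral.integral_comp_mul_left (fun u => u ^ p * L u) (hx0 n).ne'
    have e6 : (∫ u in (x n * 1)..(x n * 2), u ^ p * L u)
        = ∫ u in Ioc (x n) (2 * x n), u ^ p * L u := by
      rw [mul_one, mul_comm (x n) 2]
      exact intervalIntegral.integral_of_le (h2x n)
    rw [e2, e3, e4, e5, e6, smul_eq_mul]
    rw [Real.rpow_add_one (hx0 n).ne' p, Real.rpow_neg (hx0 n).le]
    have hne : ((x n):ℝ) ^ p ≠ 0 := (Real.rpow_pos_of_pos (hx0 n) p).ne'
    field_simp
    rw [mul_div_cancel_left₀ _ (hx0 n).ne']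
  -- Fatou
  set F : ℕ → ℝ → ENNReal := fun n t => ENNReal.ofReal (t ^ p * L (x n * t) / L (x n)) with hFdef
  have hFmeas : ∀ n, Measurable (F n) := by
    intro n
    exact (((measurable_id.pow measurable_const).mul
      (hL.1.comp (measurable_const_mul (x n)))).div_const (L (x n))).ennreal_ofReal
  have fatou := lintegral_liminf_le (μ := volume.restrict (Ioc (1:ℝ) 2)) (u := atTop) hFmeas
  have hLHS : (∫⁻ t in Ioc (1:ℝ) 2, liminf (fun n => F n t) atTop) = ENNReal.ofReal κ := by
    have ha : ∫⁻ t in Ioc (1:ℝ) 2, liminf (fun n => F n t) atTop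
        = ∫⁻ t in Ioc (1:ℝ) 2, ENNReal.ofReal (t ^ p) := by
      refine setLIntegral_congr_fun measurableSet_Ioc ?_
      intro t ht
      have ht0 : (0:ℝ) < t := by linarith [ht.1]
      have h1 : Tendsto (fun n => L (t * x n) / L (x n)) atTop (nhds 1) :=
        (hL.2.2 t ht0).comp hxtop
      have h2 : Tendsto (fun n => t ^ p * L (x n * t) / L (x n)) atTop (nhds (t ^ p)) := by
        have := (tendsto_const_nhds (x := (t:ℝ) ^ p) (f := atTop)).mul h1
        rw [mul_one] at this
        refine this.congr (fun n => ?_)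
        rw [mul_comm t (x n), mul_div_assoc]
      exact ((ENNReal.continuous_ofReal.tendsto _).comp h2).liminf_eq
    rw [ha, ← ofReal_integral_eq_lintegral_ofReal hpow_int hpow_nn]
  have hup : ∀ n, (∫⁻ t in Ioc (1:ℝ) 2, F n t) ≤ ENNReal.ofReal c := by
    intro n
    have hInt : IntegrableOn (fun t => t ^ p * L (x n * t) / L (x n)) (Ioc (1:ℝ) 2) :=
      (hJint n).div_const (L (x n))
    have hnn : 0 ≤ᶠ[ae (volume.restrict (Ioc (1:ℝ) 2))]
        fun t => t ^ p * L (x n * t) / L (x n) := by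
      filter_upwards [ae_restrict_mem measurableSet_Ioc] with t ht
      have ht0 : (0:ℝ) < t := by linarith [ht.1]
      have ha := hL.2.1 (x n * t) (mul_pos (hx0 n) ht0)
      have hb := hL.2.1 (x n) (hx0 n)
      exact div_nonneg (mul_nonneg (Real.rpow_pos_of_pos ht0 p).le ha.le) hb.le
    have e1 : (∫⁻ t in Ioc (1:ℝ) 2, F n t)
        = ENNReal.ofReal (∫ t in Ioc (1:ℝ) 2, t ^ p * L (x n * t) / L (x n)) :=
      (ofReal_integral_eq_lintegral_ofReal hInt hnn).symm
    rw [e1]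
    apply ENNReal.ofReal_le_ofReal
    have hLx : (0:ℝ) < L (x n) := hL.2.1 (x n) (hx0 n)
    have hxp1 : (0:ℝ) < (x n) ^ (p+1) := Real.rpow_pos_of_pos (hx0 n) _
    rw [integral_div]
    rw [div_le_iff₀ hLx]
    have hk := key n
    have hl := hlt n
    rw [hk] at hl
    nlinarith [hl, hxp1]
  have hfin : ENNReal.ofReal κ ≤ ENNReal.ofReal c := by
    calc ENNReal.ofReal κ = ∫⁻ t in Ioc (1:ℝ) 2, liminf (fun n => F n t) atTop := hLHS.symm
      _ ≤ liminf (fun n => ∫⁻ t in Ioc (1:ℝ) 2, F n t) atTop := fatou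
      _ ≤ liminf (fun _ : ℕ => ENNReal.ofReal c) atTop :=
          Filter.liminf_le_liminf (Filter.Eventually.of_forall hup)
      _ = ENNReal.ofReal c := liminf_const _
  exact absurd hfin (not_le.mpr ((ENNReal.ofReal_lt_ofReal_iff hκpos).mpr hc))

lemma cesaro_integral {F : ℝ → ℝ} {c : ℝ}
    (hFi : ∀ t : ℝ, 0 ≤ t → IntervalIntegrable F volume 0 t)
    (hF : Tendsto F atTop (nhds c)) :
    Tendsto (fun t => (∫ y in (0:ℝ)..t, F y) / t) atTop (nhds c) := by
  rw [Metric.tendsto_nhds]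
  intro ε hε
  obtain ⟨A, hA⟩ := (Metric.tendsto_atTop.mp hF) (ε/2) (by positivity)
  set A' := max A 0 with hA'def
  have hA'0 : 0 ≤ A' := le_max_right _ _
  have hA' : ∀ y, A' ≤ y → |F y - c| ≤ ε/2 := by
    intro y hy
    have := hA y (le_trans (le_max_left A 0) hy)
    rw [Real.dist_eq] at this
    exact this.le
  set B := ∫ y in (0:ℝ)..A', (F y - c) with hBdef
  filter_upwards [eventually_ge_atTop (A' + 1), eventually_ge_atTop (1 + |B| * (2/ε))]
    with t ht1 ht2
  have ht0 : (0:ℝ) < t := by linarith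
  have h0A : IntervalIntegrable F volume 0 A' := hFi A' hA'0
  have h0t : IntervalIntegrable F volume 0 t := hFi t ht0.le
  have hAt : IntervalIntegrable F volume A' t := h0A.symm.trans h0t
  have e : (∫ y in (0:ℝ)..t, F y) / t - c = (∫ y in (0:ℝ)..t, (F y - c)) / t := by
    rw [intervalIntegral.integral_sub h0t intervalIntegrable_const,
      intervalIntegral.integral_const]
    field_simp
    rw [sub_zero, smul_eq_mul]
  have split : (∫ y in (0:ℝ)..t, (F y - c))
      = B + ∫ y in A'..t, (F y - c) := by
    rw [hBdef]
    exact (intervalIntegral.integral_add_adjacent_intervals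
      (h0A.sub intervalIntegrable_const) (hAt.sub intervalIntegrable_const)).symm
  have bnd : |∫ y in A'..t, (F y - c)| ≤ ε/2 * |t - A'| := by
    have := intervalIntegral.norm_integral_le_of_norm_le_const
      (f := fun y => F y - c) (a := A') (b := t) (C := ε/2) ?_
    · simpa [Real.norm_eq_abs] using this
    · intro y hy
      rw [Set.uIoc_of_le (by linarith : A' ≤ t)] at hy
      exact le_trans (le_of_eq (Real.norm_eq_abs _)) (hA' y hy.1.le)
  rw [Real.dist_eq, e, split]
  rw [abs_div, abs_of_pos ht0, div_lt_iff₀ ht0]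
  have habs : |B + ∫ y in A'..t, (F y - c)| ≤ |B| + ε/2 * (t - A') := by
    calc |B + ∫ y in A'..t, (F y - c)| ≤ |B| + |∫ y in A'..t, (F y - c)| := abs_add_le _ _
      _ ≤ |B| + ε/2 * |t - A'| := by linarith [bnd]
      _ = |B| + ε/2 * (t - A') := by rw [abs_of_nonneg (by linarith : (0:ℝ) ≤ t - A')]
  have hB0 : 0 ≤ |B| := abs_nonneg _
  have hd : ε/2 * (2/ε) = 1 := by field_simp
  have hmul := mul_le_mul_of_nonneg_left ht2 (le_of_lt (half_pos hε))
  nlinarith [habs, hB0, ht1, hε, hA'0, hmul, hd]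

lemma kappa_pos (p : ℝ) : 0 < ∫ t in Ioc (1:ℝ) 2, t ^ p := by
  have hpow_int : IntegrableOn (fun t : ℝ => t ^ p) (Ioc (1:ℝ) 2) := by
    apply (ContinuousOn.integrableOn_Icc ?_).mono_set Ioc_subset_Icc_self
    intro t ht
    exact (Real.continuousAt_rpow_const t p (Or.inl (by linarith [ht.1] : t ≠ 0))).continuousWithinAt
  have hpow_nn : 0 ≤ᶠ[ae (volume.restrict (Ioc (1:ℝ) 2))] fun t : ℝ => t ^ p := by
    filter_upwards [ae_restrict_mem measurableSet_Ioc] with t ht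
    exact (Real.rpow_pos_of_pos (by linarith [ht.1]) p).le
  rw [setIntegral_pos_iff_support_of_nonneg_ae hpow_nn hpow_int]
  have hsub : Ioc (1:ℝ) 2 ⊆ Function.support (fun t : ℝ => t ^ p) ∩ Ioc 1 2 := fun t ht =>
    ⟨ne_of_gt (Real.rpow_pos_of_pos (by linarith [ht.1]) p), ht⟩
  have h1 : (0:ENNReal) < volume (Ioc (1:ℝ) 2) := by simp
  exact lt_of_lt_of_le h1 (measure_mono hsub)


/-- boundary case of the variance lemma: if `1 < α_min < 2`,
`2 − α_min − α_sess = −1`, and `c = ∫₀^∞ r(x) H̄_I(x) dx < ∞`, then for every `t > 0`,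
`V(Tt)/(T L_V(T) L_r(T)) → ∞` as `T → ∞`, and `V(t) ~ 2ct` as `t → ∞`. Here
`V(t) = 2∫₀^t∫₀^y r(x) H̄_I(x) dx dy`. -/
theorem variance_asymptotics_boundary
    (αmin αsess μmax μW : ℝ)
    (hαmin : 1 < αmin ∧ αmin < 2)
    (hcase : 2 - αmin - αsess = -1)
    (hμmax : 0 < μmax) (hμW : 0 < μW)
    (σlim2 : ℝ)
    (hσlim2 : σlim2 = 2 * μmax ^ 2 / (μW ^ 3 * (αmin - 1) * (3 - αmin) * (2 - αmin)))
    (L_r L_V : ℝ → ℝ) (hLr : SlowlyVarying L_r) (hLV : SlowlyVarying L_V)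
    -- the autocovariance `r` of the stationary on-off process
    (r : ℝ → ℝ) (hr_cont : ContinuousOn r (Set.Ici 0))
    (hr : ∀ u > (0:ℝ), r u = σlim2 / 2 * (3 - αmin) * (2 - αmin) * u ^ (1 - αmin) * L_r u)
    -- the survival function `H̄` of the lifetime distribution, with finite mean
    (Hbar : ℝ → ℝ) (hHbar_meas : Measurable Hbar)
    (hHbar_nn : ∀ x, 0 ≤ Hbar x) (hHbar_le : ∀ x > (0:ℝ), Hbar x ≤ 1)
    (hHbar : ∀ x > (0:ℝ), Hbar x = x ^ (-αsess) * L_V x)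
    (hHbar_int : IntegrableOn Hbar (Set.Ioi 0))
    -- the integrated tail `H̄_I`
    (HbarI : ℝ → ℝ) (hHbarI : ∀ x, HbarI x = ∫ z in Set.Ioi x, Hbar z)
    -- the assumption `c = ∫₀^∞ r(x) H̄_I(x) dx < ∞`
    (hc_int : IntegrableOn (fun x => r x * HbarI x) (Set.Ioi 0))
    -- the variance of the integrated process
    (V : ℝ → ℝ)
    (hV : ∀ t, V t = 2 * ∫ y in (0:ℝ)..t, ∫ x in (0:ℝ)..y, r x * HbarI x) :
    (∀ t > (0:ℝ),
      Tendsto (fun T => V (T * t) / (T * L_V T * L_r T)) atTop atTop) ∧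
    Tendsto (fun t => V t / (2 * (∫ x in Set.Ioi (0:ℝ), r x * HbarI x) * t))
      atTop (nhds 1) := by
  obtain ⟨hα1, hα2⟩ := hαmin
  have h3α : 0 < 3 - αmin := by linarith
  have h2α : 0 < 2 - αmin := by linarith
  have hσ : 0 < σlim2 := by
    rw [hσlim2]
    apply div_pos (by positivity)
    have : 0 < αmin - 1 := by linarith
    positivity
  set C : ℝ := σlim2 / 2 * (3 - αmin) * (2 - αmin) with hCdef
  have hC : 0 < C := by positivity
  have hαs : αsess = 3 - αmin := by linarith
  have hαs1 : 1 < αsess := by linarith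
  set f : ℝ → ℝ := fun u => r u * HbarI u with hfdef
  -- basic facts on HbarI
  have hHbar_pos : ∀ z > (0:ℝ), 0 < Hbar z := by
    intro z hz
    rw [hHbar z hz]
    exact mul_pos (Real.rpow_pos_of_pos hz _) (hLV.2.1 z hz)
  have hHI_nonneg : ∀ u, 0 ≤ HbarI u := by
    intro u
    rw [hHbarI u]
    exact setIntegral_nonneg measurableSet_Ioi fun z _ => hHbar_nn z
  have hHbar_int' : ∀ u : ℝ, 0 ≤ u → IntegrableOn Hbar (Ioi u) :=
    fun u hu => hHbar_int.mono_set (Ioi_subset_Ioi hu)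
  have hHI_pos : ∀ u : ℝ, 0 ≤ u → 0 < HbarI u := by
    intro u hu
    rw [hHbarI u]
    rw [setIntegral_pos_iff_support_of_nonneg_ae
      (Filter.Eventually.of_forall fun z => hHbar_nn z) (hHbar_int' u hu)]
    have hsub : Ioi u ⊆ Function.support Hbar ∩ Ioi u := fun z hz =>
      ⟨ne_of_gt (hHbar_pos z (lt_of_le_of_lt hu hz)), hz⟩
    calc (0:ENNReal) < volume (Ioi u) := by simp [Real.volume_Ioi]
      _ ≤ _ := measure_mono hsub
  have hHI_anti : ∀ u v : ℝ, 0 ≤ u → u ≤ v → HbarI v ≤ HbarI u := by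
    intro u v hu huv
    rw [hHbarI u, hHbarI v]
    exact setIntegral_mono_set (hHbar_int' u hu)
      (Filter.Eventually.of_forall fun z => hHbar_nn z)
      (HasSubset.Subset.eventuallyLE (Ioi_subset_Ioi huv))
  have hrpos : ∀ u > (0:ℝ), 0 < r u := by
    intro u hu
    rw [hr u hu]
    exact mul_pos (mul_pos (mul_pos (mul_pos (half_pos hσ) h3α) h2α)
      (Real.rpow_pos_of_pos hu _)) (hLr.2.1 u hu)
  have hfpos : ∀ u > (0:ℝ), 0 < f u := fun u hu =>
    mul_pos (hrpos u hu) (hHI_pos u hu.le)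
  -- positivity of the limiting constant
  set c₀ : ℝ := ∫ x in Ioi (0:ℝ), f x with hc₀def
  have hc₀ : 0 < c₀ := by
    rw [hc₀def, setIntegral_pos_iff_support_of_nonneg_ae ?_ hc_int]
    · have hsub : Ioi (0:ℝ) ⊆ Function.support f ∩ Ioi 0 := fun u hu =>
        ⟨ne_of_gt (hfpos u hu), hu⟩
      calc (0:ENNReal) < volume (Ioi (0:ℝ)) := by simp [Real.volume_Ioi]
        _ ≤ _ := measure_mono hsub
    · filter_upwards [ae_restrict_mem measurableSet_Ioi] with u hu
      exact (hfpos u hu).le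
  -- integrability of the power-times-slowly-varying functions on doubling intervals
  have hIocsub : ∀ x : ℝ, 1 ≤ x → Ioc x (2*x) ⊆ Ioi (0:ℝ) := by
    intro x hx u hu
    exact lt_of_lt_of_le (by linarith : (0:ℝ) < x) hu.1.le
  have hf_int_Ioc : ∀ x : ℝ, 1 ≤ x → IntegrableOn f (Ioc x (2*x)) :=
    fun x hx => hc_int.mono_set (hIocsub x hx)
  have hbound : ∀ x : ℝ, 1 ≤ x → ∀ u ∈ Ioc x (2*x),
      C * HbarI (2*x) * (u ^ (1-αmin) * L_r u) ≤ f u := by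
    intro x hx u hu
    have hu0 : (0:ℝ) < u := lt_of_lt_of_le (by linarith) hu.1.le
    have hmono : HbarI (2*x) ≤ HbarI u := hHI_anti u (2*x) hu0.le hu.2
    have hfu : f u = C * (u ^ (1-αmin) * L_r u) * HbarI u := by
      show r u * HbarI u = _
      rw [hr u hu0, hCdef]
      ring
    rw [hfu]
    have ha : 0 ≤ u ^ (1-αmin) * L_r u :=
      (mul_pos (Real.rpow_pos_of_pos hu0 _) (hLr.2.1 u hu0)).le
    have h := mul_le_mul_of_nonneg_left hmono (mul_nonneg hC.le ha)
    nlinarith [h]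
  have h_g0int : ∀ x : ℝ, 1 ≤ x →
      IntegrableOn (fun u => u ^ (1-αmin) * L_r u) (Ioc x (2*x)) := by
    intro x hx
    have hH2 : 0 < C * HbarI (2*x) := mul_pos hC (hHI_pos (2*x) (by linarith))
    refine Integrable.mono' ((hf_int_Ioc x hx).const_mul (C * HbarI (2*x))⁻¹)
      (((measurable_id.pow measurable_const).mul hLr.1).aestronglyMeasurable) ?_
    filter_upwards [ae_restrict_mem measurableSet_Ioc] with u hu
    have hu0 : (0:ℝ) < u := lt_of_lt_of_le (by linarith) hu.1.le
    have ha : 0 ≤ u ^ (1-αmin) * L_r u :=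
      (mul_pos (Real.rpow_pos_of_pos hu0 _) (hLr.2.1 u hu0)).le
    rw [Real.norm_eq_abs, abs_of_nonneg ha]
    rw [le_inv_mul_iff₀ hH2]
    exact hbound x hx u hu
  have hHb0int : ∀ x : ℝ, 1 ≤ x →
      IntegrableOn (fun u => u ^ (-αsess) * L_V u) (Ioc x (2*x)) := by
    intro x hx
    refine IntegrableOn.congr_fun (hHbar_int.mono_set (hIocsub x hx)) ?_ measurableSet_Ioc
    intro u hu
    exact hHbar u (lt_of_lt_of_le (by linarith) hu.1.le)
  -- Fatou lower bounds
  set κ₁ : ℝ := ∫ t in Ioc (1:ℝ) 2, t ^ (1-αmin) with hκ₁def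
  set κ₂ : ℝ := ∫ t in Ioc (1:ℝ) 2, t ^ (-αsess) with hκ₂def
  have hκ₁ : 0 < κ₁ := kappa_pos _
  have hκ₂ : 0 < κ₂ := kappa_pos _
  have ev1 := slowvary_fatou hLr (1-αmin) h_g0int (half_lt_self hκ₁)
  have ev2 := slowvary_fatou hLV (-αsess) hHb0int (half_lt_self hκ₂)
  have hHIlow : ∀ᶠ x in atTop, κ₂/2 * (x ^ (-αsess+1) * L_V x) ≤ HbarI x := by
    filter_upwards [ev2, eventually_ge_atTop (1:ℝ)] with x hx2 hx1
    refine le_trans hx2 ?_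
    have e : ∫ u in Ioc x (2*x), u ^ (-αsess) * L_V u = ∫ u in Ioc x (2*x), Hbar u := by
      refine setIntegral_congr_fun measurableSet_Ioc fun u hu => ?_
      exact (hHbar u (lt_of_lt_of_le (by linarith) hu.1.le)).symm
    rw [e, hHbarI x]
    exact setIntegral_mono_set (hHbar_int' x (by linarith))
      (Filter.Eventually.of_forall fun z => hHbar_nn z)
      (HasSubset.Subset.eventuallyLE (fun u hu => hu.1))
  have h2top : Tendsto (fun x : ℝ => 2*x) atTop atTop :=
    Tendsto.const_mul_atTop two_pos tendsto_id
  have hHIlow2 : ∀ᶠ x in atTop, κ₂/2 * ((2*x) ^ (-αsess+1) * L_V (2*x)) ≤ HbarI (2*x) :=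
    h2top.eventually hHIlow
  -- tail lower bound
  set Tail : ℝ → ℝ := fun x => ∫ u in Ioi x, f u with hTaildef
  set K : ℝ := C * (κ₂/2) * (κ₁/2) * 2 ^ (-αsess+1) with hKdef
  have hK : 0 < K := by
    have : (0:ℝ) < (2:ℝ) ^ (-αsess+1) := Real.rpow_pos_of_pos two_pos _
    positivity
  have hTail_low : ∀ᶠ x in atTop, K * (L_V (2*x) * L_r x) ≤ Tail x := by
    filter_upwards [ev1, hHIlow2, eventually_ge_atTop (1:ℝ)] with x hx1 hx2 hxge
    have hx0 : (0:ℝ) < x := by linarith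
    have step1 : ∫ u in Ioc x (2*x), f u ≤ Tail x := by
      refine setIntegral_mono_set (hc_int.mono_set (Ioi_subset_Ioi hx0.le)) ?_
        (HasSubset.Subset.eventuallyLE (fun u hu => hu.1))
      filter_upwards [ae_restrict_mem measurableSet_Ioi] with u hu
      exact (hfpos u (lt_trans hx0 hu)).le
    have step2 : C * HbarI (2*x) * ∫ u in Ioc x (2*x), u ^ (1-αmin) * L_r u
        ≤ ∫ u in Ioc x (2*x), f u := by
      rw [← integral_const_mul]
      exact setIntegral_mono_on ((h_g0int x hxge).const_mul _) (hf_int_Ioc x hxge)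
        measurableSet_Ioc (hbound x hxge)
    have hH2pos : 0 ≤ C * HbarI (2*x) := (mul_pos hC (hHI_pos (2*x) (by linarith))).le
    have step3 : C * HbarI (2*x) * (κ₁/2 * (x ^ ((1-αmin)+1) * L_r x))
        ≤ C * HbarI (2*x) * ∫ u in Ioc x (2*x), u ^ (1-αmin) * L_r u :=
      mul_le_mul_of_nonneg_left hx1 hH2pos
    have hq : 0 ≤ κ₁/2 * (x ^ ((1-αmin)+1) * L_r x) := by
      have := Real.rpow_pos_of_pos hx0 ((1-αmin)+1)
      have := hLr.2.1 x hx0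
      positivity
    have step4 : C * (κ₂/2 * ((2*x) ^ (-αsess+1) * L_V (2*x))) * (κ₁/2 * (x ^ ((1-αmin)+1) * L_r x))
        ≤ C * HbarI (2*x) * (κ₁/2 * (x ^ ((1-αmin)+1) * L_r x)) := by
      have := mul_le_mul_of_nonneg_left hx2 hC.le
      exact mul_le_mul_of_nonneg_right (by rw [mul_assoc] at this ⊢; exact this) hq
    -- identify the left side with K * (L_V (2x) * L_r x)
    have hexp : (2*x) ^ (-αsess+1) = 2 ^ (-αsess+1) * x ^ (-αsess+1) :=
      Real.mul_rpow (by norm_num) hx0.le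
    have hxx : x ^ (-αsess+1) * x ^ ((1-αmin)+1) = 1 := by
      rw [← Real.rpow_add hx0]
      have : -αsess + 1 + ((1-αmin)+1) = 0 := by linarith
      rw [this, Real.rpow_zero]
    have hid : K * (L_V (2*x) * L_r x)
        = C * (κ₂/2 * ((2*x) ^ (-αsess+1) * L_V (2*x))) * (κ₁/2 * (x ^ ((1-αmin)+1) * L_r x)) := by
      rw [hexp, hKdef]
      linear_combination (-(C * (κ₂/2) * (κ₁/2) * (2:ℝ) ^ (-αsess+1) * L_V (2*x) * L_r x)) * hxx
    rw [hid]
    exact le_trans step4 (le_trans step3 (le_trans step2 step1))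
  -- the tail integral tends to zero
  have hint_tendsto : Tendsto (fun x => ∫ u in (0:ℝ)..x, f u) atTop (nhds c₀) :=
    intervalIntegral_tendsto_integral_Ioi 0 hc_int tendsto_id
  have hTail_eq : ∀ x : ℝ, 0 < x → Tail x = c₀ - ∫ u in (0:ℝ)..x, f u := by
    intro x hx
    have hsplit : ∫ u in Ioc 0 x ∪ Ioi x, f u
        = (∫ u in Ioc (0:ℝ) x, f u) + ∫ u in Ioi x, f u :=
      setIntegral_union (Set.Ioc_disjoint_Ioi le_rfl) measurableSet_Ioi
        (hc_int.mono_set (fun u hu => hu.1)) (hc_int.mono_set (Ioi_subset_Ioi hx.le))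
    rw [Ioc_union_Ioi_eq_Ioi hx.le] at hsplit
    rw [hTaildef]
    rw [intervalIntegral.integral_of_le hx.le]
    simp only
    rw [← hc₀def] at hsplit
    linarith [hsplit]
  have hTail0 : Tendsto Tail atTop (nhds 0) := by
    have h1 : Tendsto (fun x => c₀ - ∫ u in (0:ℝ)..x, f u) atTop (nhds (c₀ - c₀)) :=
      tendsto_const_nhds.sub hint_tendsto
    rw [sub_self] at h1
    exact h1.congr' (by filter_upwards [eventually_gt_atTop (0:ℝ)] with x hx
      using (hTail_eq x hx).symm)
  -- product of the slowly varying factors tends to zero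
  have hLL2 : Tendsto (fun x => L_V (2*x) * L_r x) atTop (nhds 0) := by
    have hdiv : Tendsto (fun x => Tail x / K) atTop (nhds 0) := by
      have := hTail0.div_const K
      rwa [zero_div] at this
    refine squeeze_zero' ?_ ?_ hdiv
    · filter_upwards [eventually_gt_atTop (0:ℝ)] with x hx
      exact (mul_pos (hLV.2.1 (2*x) (by linarith)) (hLr.2.1 x hx)).le
    · filter_upwards [hTail_low] with x hx
      rw [le_div_iff₀ hK]
      linarith [hx]
  have hLL : Tendsto (fun T => L_V T * L_r T) atTop (nhds 0) := by
    have hhalf : Tendsto (fun T : ℝ => T/2) atTop atTop :=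
      Tendsto.atTop_div_const two_pos tendsto_id
    have p1 : Tendsto (fun T => L_V (2*(T/2)) * L_r (T/2)) atTop (nhds 0) := hLL2.comp hhalf
    have p2 : Tendsto (fun T => L_r (2*(T/2)) / L_r (T/2)) atTop (nhds 1) :=
      (hLr.2.2 2 two_pos).comp hhalf
    have p3 := p1.mul p2
    rw [zero_mul] at p3
    refine p3.congr' ?_
    filter_upwards [eventually_gt_atTop (0:ℝ)] with T hT
    have h2T : 2*(T/2) = T := by ring
    rw [h2T]
    have hne : L_r (T/2) ≠ 0 := (hLr.2.1 (T/2) (by linarith)).ne'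
    field_simp
  -- Cesàro argument for the second conclusion
  set Fc : ℝ → ℝ := fun y => ∫ x in (0:ℝ)..y, f x with hFcdef
  have hFc_tend : Tendsto Fc atTop (nhds c₀) := hint_tendsto
  have hfi : ∀ a b : ℝ, 0 ≤ a → IntervalIntegrable f volume a b ∨ True := fun _ _ _ => Or.inr trivial
  have hfii : ∀ a b : ℝ, 0 ≤ a → a ≤ b → IntervalIntegrable f volume a b := by
    intro a b ha hab
    rw [intervalIntegrable_iff_integrableOn_Ioc_of_le hab]
    exact hc_int.mono_set (fun u hu => lt_of_le_of_lt ha hu.1)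
  have hFc_mono : MonotoneOn Fc (Ici (0:ℝ)) := by
    intro a ha b hb hab
    have hadd := intervalIntegral.integral_add_adjacent_intervals
      (hfii 0 a le_rfl ha) (hfii a b ha hab)
    have hnn : 0 ≤ ∫ u in a..b, f u := by
      rw [intervalIntegral.integral_of_le hab]
      exact setIntegral_nonneg measurableSet_Ioc
        (fun u hu => (hfpos u (lt_of_le_of_lt ha hu.1)).le)
    show Fc a ≤ Fc b
    rw [hFcdef]
    simp only
    linarith [hadd, hnn]
  have hFci : ∀ t : ℝ, 0 ≤ t → IntervalIntegrable Fc volume 0 t := by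
    intro t ht
    rw [intervalIntegrable_iff_integrableOn_Ioc_of_le ht]
    have : IntegrableOn Fc (Icc 0 t) :=
      MonotoneOn.integrableOn_isCompact isCompact_Icc
        (hFc_mono.mono (Icc_subset_Ici_self))
    exact this.mono_set Ioc_subset_Icc_self
  have hVC : Tendsto (fun t => (∫ y in (0:ℝ)..t, Fc y) / t) atTop (nhds c₀) :=
    cesaro_integral hFci hFc_tend
  have part2 : Tendsto (fun t => V t / (2 * c₀ * t)) atTop (nhds 1) := by
    have h1 := hVC.div_const c₀
    rw [div_self hc₀.ne'] at h1
    refine h1.congr' ?_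
    filter_upwards [eventually_gt_atTop (0:ℝ)] with t ht
    rw [hV t]
    rw [show (∫ y in (0:ℝ)..t, ∫ x in (0:ℝ)..y, r x * HbarI x) = ∫ y in (0:ℝ)..t, Fc y from rfl]
    field_simp
  refine ⟨?_, part2⟩
  intro t ht
  have hmul : Tendsto (fun T : ℝ => T * t) atTop atTop :=
    Tendsto.atTop_mul_const ht tendsto_id
  have hA : Tendsto (fun T => V (T*t) / (2 * c₀ * (T*t))) atTop (nhds 1) := part2.comp hmul
  have hBpos : ∀ᶠ T : ℝ in atTop, L_V T * L_r T ∈ Ioi (0:ℝ) := by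
    filter_upwards [eventually_gt_atTop (0:ℝ)] with T hT
    exact mul_pos (hLV.2.1 T hT) (hLr.2.1 T hT)
  have hinv : Tendsto (fun T => (L_V T * L_r T)⁻¹) atTop atTop :=
    Tendsto.inv_tendsto_nhdsGT_zero (tendsto_nhdsWithin_iff.mpr ⟨hLL, hBpos⟩)
  have hB : Tendsto (fun T => (2 * c₀ * t) * (L_V T * L_r T)⁻¹) atTop atTop :=
    Tendsto.const_mul_atTop (by positivity) hinv
  have hfinal := Tendsto.pos_mul_atTop one_pos hA hB
  refine hfinal.congr' ?_
  filter_upwards [eventually_gt_atTop (0:ℝ)] with T hT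
  have hLVne : L_V T ≠ 0 := (hLV.2.1 T hT).ne'
  have hLrne : L_r T ≠ 0 := (hLr.2.1 T hT).ne'
  field_simp
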